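/- Let Q be a real n×n matrix such that the operator norm (with respect to the Euclidean norm on ℝⁿ) of exp(Qx) is at most 1 for all x ≥ 0. Then the set W_Q := { a ∈ ℝⁿ : ‖exp(Qx)a‖ = ‖a‖ for all x ≥ 0 } is a linear subspace of ℝⁿ, and both W_Q and its orthogonal complement W_Q^⊥ are invariant under exp(Qx) for every x ≥ 0. -/

import Mathlib

open Real Matrix
open scoped Matrix.Norms.L2Operator RealInnerProductSpace

section Aux

variable {n : ℕ}

local notation "E" => EuclideanSpace ℝ (Fin n)

/-- If `T` is a contraction and `‖T a‖ = ‖a‖`, then `T* (T a) = a`. -/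
lemma aux_adjoint_comp_eq {T : E →L[ℝ] E} (hT : ‖T‖ ≤ 1) {a : E}
    (ha : ‖T a‖ = ‖a‖) : ContinuousLinearMap.adjoint T (T a) = a := by
  set b := ContinuousLinearMap.adjoint T (T a) with hb
  have hadj : ‖ContinuousLinearMap.adjoint T‖ ≤ 1 := by
    rw [ContinuousLinearMap.adjoint.norm_map T]; exact hT
  have h1 : ‖b‖ ≤ ‖a‖ := by
    calc ‖b‖ ≤ ‖ContinuousLinearMap.adjoint T‖ * ‖T a‖ :=
          (ContinuousLinearMap.adjoint T).le_opNorm _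
      _ ≤ 1 * ‖a‖ := by rw [ha]; exact mul_le_mul_of_nonneg_right hadj (norm_nonneg _)
      _ = ‖a‖ := one_mul _
  have h2 : (inner ℝ b a : ℝ) = ‖a‖ ^ 2 := by
    rw [hb, ContinuousLinearMap.adjoint_inner_left, real_inner_self_eq_norm_sq, ha]
  have h3 : ‖b - a‖ ^ 2 = 0 := by
    have := @norm_sub_sq_real E _ _ b a
    nlinarith [norm_nonneg b, norm_nonneg a, sq_nonneg (‖b - a‖)]
  have h4 : b - a = 0 := by
    have := pow_eq_zero_iff (n := 2) (by norm_num) |>.mp h3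
    exact norm_eq_zero.mp this
  exact sub_eq_zero.mp h4
  
/-- If `T` is a contraction and `‖T a‖ = ‖a‖`, then `⟪T a, T b⟫ = ⟪a, b⟫` for all `b`. -/
lemma aux_inner_eq {T : E →L[ℝ] E} (hT : ‖T‖ ≤ 1) {a : E}
    (ha : ‖T a‖ = ‖a‖) (b : E) : (inner ℝ (T a) (T b) : ℝ) = inner ℝ a b := by
  rw [← ContinuousLinearMap.adjoint_inner_left, aux_adjoint_comp_eq hT ha]

end Aux

/-- If `‖exp(Qx)‖ ≤ 1` for all `x ≥ 0` (Euclidean operator norm), then the set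
`W_Q = { a : ‖exp(Qx)a‖ = ‖a‖ for all x ≥ 0 }` is a linear subspace, and both `W_Q`
and its orthogonal complement are invariant under `exp(Qx)` for every `x ≥ 0`. -/
theorem exists_submodule_norm_exp_eq (n : ℕ) (Q : Matrix (Fin n) (Fin n) ℝ)
    (h : ∀ x : ℝ, 0 ≤ x → ‖NormedSpace.exp (x • Q)‖ ≤ 1) :
    ∃ W : Submodule ℝ (EuclideanSpace ℝ (Fin n)),
      (∀ a : EuclideanSpace ℝ (Fin n), a ∈ W ↔
        ∀ x : ℝ, 0 ≤ x →
          ‖Matrix.toEuclideanCLM (𝕜 := ℝ) (NormedSpace.exp (x • Q)) a‖ = ‖a‖) ∧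
      (∀ x : ℝ, 0 ≤ x → ∀ a ∈ W,
        Matrix.toEuclideanCLM (𝕜 := ℝ) (NormedSpace.exp (x • Q)) a ∈ W) ∧
      (∀ x : ℝ, 0 ≤ x → ∀ a ∈ Wᗮ,
        Matrix.toEuclideanCLM (𝕜 := ℝ) (NormedSpace.exp (x • Q)) a ∈ Wᗮ) := by
  classical
  set T : ℝ → (EuclideanSpace ℝ (Fin n) →L[ℝ] EuclideanSpace ℝ (Fin n)) :=
    fun x => Matrix.toEuclideanCLM (𝕜 := ℝ) (NormedSpace.exp (x • Q)) with hTdef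
  have hTnorm : ∀ x : ℝ, 0 ≤ x → ‖T x‖ ≤ 1 := by
    intro x hx
    have := h x hx
    rwa [Matrix.cstar_norm_def] at this
  have hcontr : ∀ x : ℝ, 0 ≤ x → ∀ a, ‖T x a‖ ≤ ‖a‖ := by
    intro x hx a
    calc ‖T x a‖ ≤ ‖T x‖ * ‖a‖ := (T x).le_opNorm a
      _ ≤ 1 * ‖a‖ := mul_le_mul_of_nonneg_right (hTnorm x hx) (norm_nonneg _)
      _ = ‖a‖ := one_mul _
  have hsemi : ∀ x y : ℝ, ∀ a, T x (T y a) = T (x + y) a := by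
    intro x y a
    have hc : Commute (x • Q) (y • Q) := ((Commute.refl Q).smul_left x).smul_right y
    have : NormedSpace.exp ((x + y) • Q)
        = NormedSpace.exp (x • Q) * NormedSpace.exp (y • Q) := by
      rw [add_smul]
      exact Matrix.exp_add_of_commute _ _ hc
    rw [hTdef]
    simp only [this, _root_.map_mul]
    rfl
  have hadd : ∀ a ∈ {a : EuclideanSpace ℝ (Fin n) | ∀ x : ℝ, 0 ≤ x → ‖T x a‖ = ‖a‖},
      ∀ b ∈ {a : EuclideanSpace ℝ (Fin n) | ∀ x : ℝ, 0 ≤ x → ‖T x a‖ = ‖a‖},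
      a + b ∈ {a : EuclideanSpace ℝ (Fin n) | ∀ x : ℝ, 0 ≤ x → ‖T x a‖ = ‖a‖} := by
    intro a ha b hb x hx
    have pl1 := @parallelogram_law_with_norm ℝ (EuclideanSpace ℝ (Fin n)) _ _ _ (T x a) (T x b)
    have pl2 := @parallelogram_law_with_norm ℝ (EuclideanSpace ℝ (Fin n)) _ _ _ a b
    have h1 : ‖T x (a + b)‖ ≤ ‖a + b‖ := hcontr x hx _
    have h2 : ‖T x (a - b)‖ ≤ ‖a - b‖ := hcontr x hx _
    have e1 : T x (a + b) = T x a + T x b := map_add _ _ _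
    have e2 : T x (a - b) = T x a - T x b := map_sub _ _ _
    rw [e1] at h1; rw [e2] at h2
    have ha' := ha x hx
    have hb' := hb x hx
    rw [ha', hb'] at pl1
    rw [e1]
    refine le_antisymm h1 ?_
    have hsq : ‖T x a - T x b‖ * ‖T x a - T x b‖ ≤ ‖a - b‖ * ‖a - b‖ :=
      mul_self_le_mul_self (norm_nonneg _) h2
    have key : ‖a + b‖ * ‖a + b‖ ≤ ‖T x a + T x b‖ * ‖T x a + T x b‖ := by linarith
    exact (mul_self_le_mul_self_iff (norm_nonneg _) (norm_nonneg _)).mpr key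
  set W : Submodule ℝ (EuclideanSpace ℝ (Fin n)) :=
    { carrier := {a | ∀ x : ℝ, 0 ≤ x → ‖T x a‖ = ‖a‖}
      zero_mem' := by intro x hx; simp
      add_mem' := fun {a b} ha hb => hadd a ha b hb
      smul_mem' := by
        intro c a ha x hx
        have : T x (c • a) = c • T x a := map_smul _ _ _
        rw [this, norm_smul, norm_smul, ha x hx] } with hWdef
  have hWinv : ∀ x : ℝ, 0 ≤ x → ∀ a ∈ W, T x a ∈ W := by
    intro x hx a ha y hy
    rw [hsemi y x a, ha (y + x) (by linarith), ha x hx]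
  refine ⟨W, fun a => Iff.rfl, hWinv, ?_⟩
  intro x hx b hb
  intro w hw
  let f : W →ₗ[ℝ] W := ((T x).toLinearMap).restrict (hWinv x hx)
  have hinj : Function.Injective f := by
    rw [← LinearMap.ker_eq_bot, LinearMap.ker_eq_bot']
    intro m hm
    have h0 : T x (m : EuclideanSpace ℝ (Fin n)) = 0 := congrArg Subtype.val hm
    have hn : ‖(m : EuclideanSpace ℝ (Fin n))‖ = 0 := by
      rw [← m.2 x hx, h0, norm_zero]
    exact Subtype.ext (norm_eq_zero.mp hn)
  have hsurj : Function.Surjective f := LinearMap.injective_iff_surjective.mp hinj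
  obtain ⟨w', hw'⟩ := hsurj ⟨w, hw⟩
  have hww : T x (w' : EuclideanSpace ℝ (Fin n)) = w := congrArg Subtype.val hw'
  have hiso : ‖T x (w' : EuclideanSpace ℝ (Fin n))‖ = ‖(w' : EuclideanSpace ℝ (Fin n))‖ :=
    w'.2 x hx
  have hkey := aux_inner_eq (hTnorm x hx) hiso b
  rw [hww] at hkey
  rw [hkey]
  exact (Submodule.mem_orthogonal W b).mp hb _ w'.2
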